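/- The q-bracket of the 'integer' function n_* equals ∑_{λ∈P} φ(λ) q^{|λ|}; equivalently, for every integer n ≥ 0, ∑_{λ⊢n} n_λ = ∑_{k=0}^{n} (∑_{δ⊢k} φ(δ)) · p(n−k). -/

import Mathlib

/-- The set of partition divisors (sub-partitions) of `l`. -/
def pdivisors (l : Multiset ℕ+) : Finset (Multiset ℕ+) := l.powerset.toFinset

/-- Partition-theoretic Möbius function. -/
def pmu (l : Multiset ℕ+) : ℂ := if l.Nodup then (-1 : ℂ) ^ (Multiset.card l) else 0

/-- The "integer" of a partition: the product of its parts. -/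
def nInt (l : Multiset ℕ+) : ℕ := (l.map (fun a => (a : ℕ))).prod

/-- Partition-theoretic phi function. -/
noncomputable def pphi (l : Multiset ℕ+) : ℂ :=
  (nInt l : ℂ) * ∏ a ∈ l.toFinset, (1 - (a : ℂ)⁻¹)

/-- Convert a `Nat.Partition n` to a multiset of positive integers. -/
def toPtn {n : ℕ} (p : n.Partition) : Multiset ℕ+ :=
  p.parts.pmap (fun x hx => ⟨x, hx⟩) (fun _ hx => p.parts_pos hx)

/-- The partition function `p(n)`. -/
def partcount (n : ℕ) : ℕ := Fintype.card (Nat.Partition n)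

/-- A partition lies in `P₌` iff it is nonempty with all parts equal. -/
def isPeq (l : Multiset ℕ+) : Prop :=
  ∃ (a : ℕ+) (k : ℕ), 0 < k ∧ l = Multiset.replicate k a

lemma mem_pdivisors {d l : Multiset ℕ+} : d ∈ pdivisors l ↔ d ≤ l := by
  simp [pdivisors, Multiset.mem_toFinset, Multiset.mem_powerset]

/-- sum of a multiset of positive naturals -/
def msum (l : Multiset ℕ+) : ℕ := (l.map (fun a : ℕ+ => (a : ℕ))).sum

lemma coe_toPtn {n : ℕ} (p : n.Partition) : (toPtn p).map (fun a : ℕ+ => (a : ℕ)) = p.parts := by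
  unfold toPtn; exact (Multiset.map_pmap _ _ _ _).trans ((Multiset.pmap_eq_map _ id _ _).trans (Multiset.map_id _))

lemma msum_toPtn {n : ℕ} (p : n.Partition) : msum (toPtn p) = n := by
  rw [msum, coe_toPtn]; exact p.parts_sum

lemma toPtn_injective {n : ℕ} : Function.Injective (toPtn (n := n)) := by
  intro p q h
  have : p.parts = q.parts := by rw [← coe_toPtn p, ← coe_toPtn q, h]
  cases p; cases q; simpa using this

/-- Finset of multisets of positive integers with sum n. -/
noncomputable def Pn (n : ℕ) : Finset (Multiset ℕ+) := Finset.univ.image (toPtn (n := n))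

lemma mem_Pn {n : ℕ} {l : Multiset ℕ+} : l ∈ Pn n ↔ msum l = n := by
  constructor
  · rintro h
    simp only [Pn, Finset.mem_image] at h
    obtain ⟨p, -, rfl⟩ := h
    exact msum_toPtn p
  · intro h
    have hp : ∀ i ∈ l.map (fun a : ℕ+ => (a : ℕ)), 0 < i := by
      simp only [Multiset.mem_map]
      rintro i ⟨a, -, rfl⟩
      exact a.pos
    refine Finset.mem_image.2
      ⟨⟨l.map (fun a : ℕ+ => (a : ℕ)), fun hi => hp _ hi, h⟩, Finset.mem_univ _, ?_⟩
    apply Multiset.map_injective (f := fun a : ℕ+ => (a : ℕ)) (fun a b hab => PNat.coe_injective hab)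
    rw [coe_toPtn]

lemma sum_Pn {k : ℕ} (f : Multiset ℕ+ → ℂ) :
    (∑ d : k.Partition, f (toPtn d)) = ∑ l ∈ Pn k, f l :=
  (Finset.sum_image (fun a _ b _ h => toPtn_injective h)).symm

lemma card_Pn (k : ℕ) : (Pn k).card = partcount k := by
  rw [Pn, Finset.card_image_of_injective _ toPtn_injective, partcount, Finset.card_univ]

lemma nInt_add (s t : Multiset ℕ+) : nInt (s + t) = nInt s * nInt t := by
  simp [nInt, Multiset.map_add, Multiset.prod_add]

lemma pphi_add {s t : Multiset ℕ+} (h : Disjoint s.toFinset t.toFinset) :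
    pphi (s + t) = pphi s * pphi t := by
  simp only [pphi, nInt_add, Nat.cast_mul, Multiset.toFinset_add, Finset.prod_union h]
  ring

lemma pphi_replicate (a : ℕ+) (k : ℕ) :
    pphi (Multiset.replicate k a)
      = if k = 0 then 1 else (a : ℂ) ^ k * (1 - (a : ℂ)⁻¹) := by
  rcases Nat.eq_zero_or_pos k with rfl | hk
  · simp [pphi, nInt]
  · rw [if_neg hk.ne']
    simp [pphi, nInt, Multiset.map_replicate, Multiset.prod_replicate,
      Multiset.toFinset_replicate, if_neg hk.ne']

lemma geom_phi (a : ℕ+) (m : ℕ) :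
    (∑ k ∈ Finset.range (m + 1),
      if k = 0 then (1 : ℂ) else (a : ℂ) ^ k * (1 - (a : ℂ)⁻¹)) = (a : ℂ) ^ m := by
  have ha : (a : ℂ) ≠ 0 := by exact_mod_cast a.ne_zero
  induction m with
  | zero => simp
  | succ m ih =>
    rw [Finset.sum_range_succ, ih, if_neg (Nat.succ_ne_zero m)]
    field_simp
    ring

lemma nInt_eq_sum_pphi (l : Multiset ℕ+) :
    (nInt l : ℂ) = ∑ d ∈ pdivisors l, pphi d := by
  induction l using Multiset.strongInductionOn with
  | ih l ih =>
    rcases Multiset.empty_or_exists_mem l with rfl | ⟨a, ha⟩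
    · simp [pdivisors, pphi, nInt]
    · set m := l.count a with hm
      set r := l.filter (fun b => ¬ b = a) with hr
      have hla : l.filter (fun b => b = a) = Multiset.replicate m a := Multiset.filter_eq' l a
      have hl : Multiset.replicate m a + r = l := by
        rw [hr, ← hla]; exact Multiset.filter_add_not _ l
      have har : a ∉ r := by
        intro h
        exact (Multiset.of_mem_filter h) rfl
      have hrl : r < l :=
        lt_of_le_of_ne (Multiset.filter_le _ l) (fun h => har (h ▸ ha))
      have hnotr : ∀ d' : Multiset ℕ+, d' ≤ r → a ∉ d' := fun d' hd' h =>
        har (Multiset.mem_of_le hd' h)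
      -- decomposition of any sub-multiset
      have hdec : ∀ d : Multiset ℕ+,
          Multiset.replicate (d.count a) a + d.filter (fun b => ¬ b = a) = d := by
        intro d
        rw [← Multiset.filter_eq' d a]
        exact Multiset.filter_add_not _ d
      have key : (∑ d ∈ pdivisors l, pphi d)
          = ∑ x ∈ (Finset.range (m + 1)) ×ˢ pdivisors r,
              pphi (Multiset.replicate x.1 a + x.2) := by
        refine Finset.sum_nbij'
          (fun d => (d.count a, d.filter (fun b => ¬ b = a)))
          (fun x => Multiset.replicate x.1 a + x.2) ?_ ?_ ?_ ?_ ?_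
        · intro d hd
          rw [mem_pdivisors] at hd
          refine Finset.mem_product.2 ⟨Finset.mem_range.2 (Nat.lt_succ_of_le ?_),
            mem_pdivisors.2 (le_trans (Multiset.filter_le_filter _ hd) (le_of_eq hr.symm))⟩
          exact Multiset.count_le_of_le a hd
        · rintro ⟨k, d'⟩ hx
          obtain ⟨hk, hd'⟩ := Finset.mem_product.1 hx
          rw [mem_pdivisors] at hd' ⊢
          rw [← hl]
          exact add_le_add ((Multiset.replicate_le_replicate a).2
            (Nat.lt_succ_iff.1 (Finset.mem_range.1 hk))) hd'
        · intro d _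
          exact hdec d
        · rintro ⟨k, d'⟩ hx
          obtain ⟨hk, hd'⟩ := Finset.mem_product.1 hx
          rw [mem_pdivisors] at hd'
          have hna : a ∉ d' := hnotr d' hd'
          have h1 : (Multiset.replicate k a + d').count a = k := by
            rw [Multiset.count_add, Multiset.count_replicate, if_pos rfl,
              Multiset.count_eq_zero_of_notMem hna, add_zero]
          have h2 : (Multiset.replicate k a + d').filter (fun b => ¬ b = a) = d' := by
            rw [Multiset.filter_add]
            rw [Multiset.filter_eq_nil.2 (by
              intro b hb
              rw [Multiset.eq_of_mem_replicate hb]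
              simp), Multiset.filter_eq_self.2 (by
              intro b hb hba
              exact hna (hba ▸ hb)), zero_add]
          simp [h1, h2]
        · intro d _
          simp only []
          conv_lhs => rw [← hdec d]
      rw [key, Finset.sum_product]
      have hsplit : ∀ k : ℕ, ∀ d' ∈ pdivisors r,
          pphi (Multiset.replicate k a + d')
            = (if k = 0 then (1:ℂ) else (a : ℂ) ^ k * (1 - (a : ℂ)⁻¹)) * pphi d' := by
        intro k d' hd'
        have hna : a ∉ d' := hnotr d' (mem_pdivisors.1 hd')
        rw [pphi_add, pphi_replicate]
        rw [Multiset.toFinset_replicate]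
        rcases eq_or_ne k 0 with rfl | hk
        · simp
        · rw [if_neg hk]
          simp only [Finset.disjoint_singleton_left, Multiset.mem_toFinset]
          exact hna
      calc (nInt l : ℂ)
          = (a : ℂ) ^ m * (nInt r : ℂ) := by
            rw [← hl, nInt_add]
            push_cast
            congr 1
            simp [nInt, Multiset.map_replicate, Multiset.prod_replicate]
        _ = (∑ k ∈ Finset.range (m + 1),
              if k = 0 then (1:ℂ) else (a : ℂ) ^ k * (1 - (a : ℂ)⁻¹))
            * ∑ d' ∈ pdivisors r, pphi d' := by rw [geom_phi, ih r hrl]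
        _ = ∑ k ∈ Finset.range (m + 1), ∑ d' ∈ pdivisors r,
              pphi (Multiset.replicate k a + d') := by
            rw [Finset.sum_mul_sum]
            refine Finset.sum_congr rfl fun k _ => Finset.sum_congr rfl fun d' hd' => ?_
            rw [hsplit k d' hd']

lemma msum_add (s t : Multiset ℕ+) : msum (s + t) = msum s + msum t := by
  simp [msum, Multiset.map_add, Multiset.sum_add]

/-- `⟨n_*⟩_q = ∑_{λ∈P} φ(λ) q^{|λ|}`: in graded form, for every `n ≥ 0`,
`∑_{λ⊢n} n_λ = ∑_{k=0}^{n} (∑_{δ⊢k} φ(δ))·p(n−k)`. -/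
theorem qbracket_nInt (n : ℕ) :
    (∑ p : n.Partition, (nInt (toPtn p) : ℂ))
      = ∑ k ∈ Finset.range (n + 1),
          (∑ d : k.Partition, pphi (toPtn d)) * (partcount (n - k) : ℂ) := by
  rw [sum_Pn (fun l => (nInt l : ℂ))]
  have step1 : (∑ l ∈ Pn n, (nInt l : ℂ))
      = ∑ x ∈ (Pn n).sigma (fun l => pdivisors l), pphi x.2 := by
    rw [Finset.sum_sigma]
    exact Finset.sum_congr rfl fun l _ => nInt_eq_sum_pphi l
  rw [step1]
  have step2 : (∑ x ∈ (Pn n).sigma (fun l => pdivisors l), pphi x.2)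
      = ∑ y ∈ (Finset.range (n + 1)).sigma
          (fun k => (Pn k) ×ˢ (Pn (n - k))), pphi y.2.1 := by
    refine Finset.sum_nbij'
      (fun x => ⟨msum x.2, (x.2, x.1 - x.2)⟩)
      (fun y => ⟨y.2.1 + y.2.2, y.2.1⟩) ?_ ?_ ?_ ?_ ?_
    · rintro ⟨l, d⟩ hx
      dsimp only at *
      obtain ⟨hl, hd⟩ := Finset.mem_sigma.1 hx
      rw [mem_Pn] at hl
      rw [mem_pdivisors] at hd
      have hsum : msum d + msum (l - d) = n := by
        rw [← msum_add, add_tsub_cancel_of_le hd, hl]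
      refine Finset.mem_sigma.2 ⟨?_, ?_⟩ <;> dsimp only
      · exact Finset.mem_range.2 (Nat.lt_succ_of_le (by omega))
      · exact Finset.mem_product.2 ⟨mem_Pn.2 rfl, mem_Pn.2 (by dsimp only; omega)⟩
    · rintro ⟨k, d, m'⟩ hy
      dsimp only at *
      obtain ⟨hk, hdm⟩ := Finset.mem_sigma.1 hy
      obtain ⟨hd, hm⟩ := Finset.mem_product.1 hdm
      rw [mem_Pn] at hd hm
      rw [Finset.mem_range] at hk
      refine Finset.mem_sigma.2 ⟨mem_Pn.2 ?_, mem_pdivisors.2 (Multiset.le_add_right _ _)⟩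
      rw [msum_add, hd, hm]
      omega
    · rintro ⟨l, d⟩ hx
      obtain ⟨-, hd⟩ := Finset.mem_sigma.1 hx
      rw [mem_pdivisors] at hd
      simp only
      rw [add_tsub_cancel_of_le hd]
    · rintro ⟨k, d, m'⟩ hy
      obtain ⟨-, hdm⟩ := Finset.mem_sigma.1 hy
      obtain ⟨hd, -⟩ := Finset.mem_product.1 hdm
      rw [mem_Pn] at hd
      dsimp only at hd
      clear hy hdm
      subst hd
      try dsimp only
      rw [add_tsub_cancel_left]
    · rintro ⟨l, d⟩ _
      rfl
  rw [step2, Finset.sum_sigma]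
  refine Finset.sum_congr rfl fun k _ => ?_
  rw [Finset.sum_product, sum_Pn (fun l => pphi l), ← card_Pn, Finset.sum_mul]
  refine Finset.sum_congr rfl fun d _ => ?_
  dsimp only
  rw [Finset.sum_const, nsmul_eq_mul, mul_comm]
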